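/- Let X¹ ⊆ X² ⊆ X³ ⊆ ⋯ be an increasing sequence of T1 topological spaces such that each inclusion map φ_i : X^i → X^{i+1} is a homeomorphism onto a closed subset of X^{i+1}, and let X = ⋃_n X^n carry the final (direct-limit) topology determined by the inclusions f_i : X^i → X. Then for every compact subset K ⊆ X there exists an index i₀ such that K ⊆ X^i for all i ≥ i₀. -/

import Mathlib

open Set

/-- **Steenrod's lemma for direct limits.**  Let `X = ⋃ n, A n` be the union of an
increasing sequence of subsets, each of which (with the subspace topology) is a `T1`
space, such that each `A i` is closed in `A (i+1)`, and such that the topology of `X`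
is the final (direct-limit) topology determined by the inclusions `A i ↪ X` (a set is
open iff its trace on every `A i` is open).  Then every compact subset `K ⊆ X` is
contained in `A i` for all sufficiently large `i`. -/
theorem compact_subset_of_directLimit
    {X : Type*} [TopologicalSpace X]
    (A : ℕ → Set X) (hmono : Monotone A) (hcover : ⋃ i, A i = univ)
    (hfinal : ∀ U : Set X, IsOpen U ↔ ∀ i, IsOpen (Subtype.val ⁻¹' U : Set (A i)))
    (hT1 : ∀ i, T1Space (A i))
    (hstep : ∀ i, IsClosed (Subtype.val ⁻¹' (A i) : Set (A (i + 1))))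
    (K : Set X) (hK : IsCompact K) :
    ∃ i₀ : ℕ, ∀ i ≥ i₀, K ⊆ A i := by
  by_contra h
  push_neg at h
  have hx : ∀ n : ℕ, ∃ x ∈ K, x ∉ A n := by
    intro n
    obtain ⟨i, hi, hKi⟩ := h n
    obtain ⟨x, hxK, hxA⟩ := not_subset.mp hKi
    exact ⟨x, hxK, fun hxn => hxA (hmono hi hxn)⟩
  choose x hxK hxA using hx
  -- closedness can be tested on each `A i`
  have hclosed : ∀ C : Set X, (∀ i, IsClosed (Subtype.val ⁻¹' C : Set (A i))) → IsClosed C := by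
    intro C hC
    rw [← isOpen_compl_iff, hfinal]
    intro i
    have := (hC i).isOpen_compl
    convert this using 1
    exact preimage_compl
  -- every subset of the range of `x` is closed
  have hDsub : ∀ S : Set X, S ⊆ range x → IsClosed S := by
    intro S hS
    apply hclosed
    intro i
    haveI := hT1 i
    have hfin : (Subtype.val ⁻¹' S : Set (A i)).Finite := by
      have hsub : (Subtype.val ⁻¹' S : Set (A i)) ⊆ Subtype.val ⁻¹' (x '' {n | n < i}) := by
        rintro ⟨a, ha⟩ haS
        obtain ⟨n, rfl⟩ := hS haS
        refine ⟨n, ?_, rfl⟩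
        by_contra hn
        simp only [mem_setOf_eq, not_lt] at hn
        exact hxA n (hmono hn ha)
      exact (Set.Finite.preimage (Subtype.val_injective.injOn)
        ((finite_Iio i).image x)).subset hsub
    exact hfin.isClosed
  have hD : IsClosed (range x) := hDsub _ subset_rfl
  have hDK : range x ⊆ K := range_subset_iff.mpr hxK
  have hDcomp : IsCompact (range x) := hK.of_isClosed_subset hD hDK
  -- cover by complements of `range x \ {d}`
  have hcov : range x ⊆ ⋃ d : X, ((range x \ {d})ᶜ) := by
    intro y hy
    exact mem_iUnion.mpr ⟨y, by simp⟩
  obtain ⟨t, ht⟩ := hDcomp.elim_finite_subcover (fun d : X => (range x \ {d})ᶜ)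
    (fun d => (hDsub _ diff_subset).isOpen_compl) hcov
  have hfin : (range x).Finite := by
    refine Finite.subset t.finite_toSet ?_
    intro y hy
    obtain ⟨d, hdt, hyd⟩ := mem_iUnion₂.mp (ht hy)
    have : y = d := by
      by_contra hne
      exact hyd ⟨hy, hne⟩
    exact this ▸ hdt
  -- a finite set is contained in some `A N`
  have hmem : ∀ y : X, ∃ n, y ∈ A n := by
    intro y
    have : y ∈ ⋃ i, A i := hcover.symm ▸ mem_univ y
    exact mem_iUnion.mp this
  choose f hf using hmem
  set N := hfin.toFinset.sup f with hN
  have : x N ∈ A N := by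
    have hmemN : f (x N) ≤ N := Finset.le_sup (hfin.mem_toFinset.mpr (mem_range_self N))
    exact hmono hmemN (hf (x N))
  exact hxA N this
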